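/- Let (x*, w*, y*) be an optimal solution of the DH relaxation. Then M¹(w*) + M²(x*) ≥ (1 − 1/e) · max{ M¹(w) + M²(x) : (x, w) ∈ R¹ }. In words, the first-period decisions produced by the Dating Heuristic (the integral optimal solution of the relaxation), followed by optimal second-period responses, guarantee at least a 1 − 1/e fraction of the optimal expected number of matches of the two-period problem with two-directional interactions and non-sequential matches allowed in the first period. -/

import Mathlib

open scoped Classical
noncomputable section

/-- The set of directed arcs between the two sides `I` and `J`. -/
abbrev Arc (I J : Type*) := (I × J) ⊕ (J × I)

/-- Reversal of a directed arc. -/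
def arcRev {I J : Type*} : Arc I J → Arc I J
  | Sum.inl (i, j) => Sum.inr (j, i)
  | Sum.inr (j, i) => Sum.inl (i, j)

/-- Source (tail) of a directed arc. -/
def arcSrc {I J : Type*} : Arc I J → I ⊕ J
  | Sum.inl (i, _) => Sum.inl i
  | Sum.inr (j, _) => Sum.inr j

/-- Out-degree of a user in a set of arcs. -/
def outdegX {I J : Type*} (X : Finset (Arc I J)) (l : I ⊕ J) : ℕ :=
  (X.filter fun a => arcSrc a = l).card

/-- Number of displayed unordered pairs containing a given user. -/
def wdeg {I J : Type*} (W : Finset (I × J)) : I ⊕ J → ℕ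
  | Sum.inl i => (W.filter fun e => e.1 = i).card
  | Sum.inr j => (W.filter fun e => e.2 = j).card

/-- `max { ∑_{x ∈ S} φ x : S ⊆ s, |S| ≤ K }`. -/
def bestSum {α : Type*} (s : Finset α) (K : ℕ) (φ : α → ℝ) : ℝ :=
  (s.powerset.filter fun S => S.card ≤ K).sup' ⟨∅, by simp⟩ fun S => ∑ x ∈ S, φ x

/-- Backlog of a user `i ∈ I` in a set of arcs `B`. -/
def backlogI {I J : Type*} [Fintype J] (B : Finset (Arc I J)) (i : I) : Finset J :=
  Finset.univ.filter fun j => Sum.inr (j, i) ∈ B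

/-- Backlog of a user `j ∈ J` in a set of arcs `B`. -/
def backlogJ {I J : Type*} [Fintype I] (B : Finset (Arc I J)) (j : J) : Finset I :=
  Finset.univ.filter fun i => Sum.inl (i, j) ∈ B

/-- The second-period (sequential) value function `f`. -/
def fval {I J : Type*} [Fintype I] [Fintype J] (φ2 : Arc I J → ℝ) (K : I ⊕ J → ℕ)
    (B : Finset (Arc I J)) : ℝ :=
  (∑ i : I, bestSum (backlogI B i) (K (Sum.inl i)) fun j => φ2 (Sum.inl (i, j))) +
  ∑ j : J, bestSum (backlogJ B j) (K (Sum.inr j)) fun i => φ2 (Sum.inr (j, i))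

/-- Probability that the realized backlog is exactly `B`, given displayed arcs `x`. -/
def probOf {I J : Type*} [Fintype I] [Fintype J] (φ1 : Arc I J → ℝ)
    (x : Finset (Arc I J)) (B : Finset (Arc I J)) : ℝ :=
  (∏ a ∈ B, (if a ∈ x then φ1 a else 0)) *
    ∏ a ∈ Bᶜ, (1 - if a ∈ x then φ1 a else 0)

/-- Expected number of second-period (sequential) matches. -/
def M2 {I J : Type*} [Fintype I] [Fintype J] (φ1 φ2 : Arc I J → ℝ) (K : I ⊕ J → ℕ)
    (x : Finset (Arc I J)) : ℝ :=
  ∑ B : Finset (Arc I J), fval φ2 K B * probOf φ1 x B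

/-- Sum, over the arcs leaving a given user, of a vector indexed by arcs. -/
def outSumF {I J : Type*} [Fintype I] [Fintype J] (y : Arc I J → ℝ) : I ⊕ J → ℝ
  | Sum.inl i => ∑ j, y (Sum.inl (i, j))
  | Sum.inr j => ∑ i, y (Sum.inr (j, i))

/-- Expected number of non-sequential first-period matches. -/
def M1 {I J : Type*} [Fintype I] [Fintype J] (φ1 : Arc I J → ℝ)
    (w : Finset (I × J)) : ℝ :=
  ∑ e ∈ w, φ1 (Sum.inl e) * φ1 (Sum.inr (e.2, e.1))

/-- The general first-period feasible region `R¹` (two-directional interactions,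
non-sequential matches allowed in the first period). -/
def R1mem {I J : Type*} [Fintype I] [Fintype J] (K : I ⊕ J → ℕ)
    (x : Finset (Arc I J)) (w : Finset (I × J)) : Prop :=
  (∀ (i : I) (j : J),
    ((if (Sum.inl (i, j) : Arc I J) ∈ x then 1 else 0) +
      (if (Sum.inr (j, i) : Arc I J) ∈ x then 1 else 0) +
      (if (i, j) ∈ w then (1 : ℕ) else 0)) ≤ 1) ∧
  ∀ l : I ⊕ J, outdegX x l + wdeg w l ≤ K l

/-- Feasibility for the DH relaxation. -/
def DHfeas {I J : Type*} [Fintype I] [Fintype J] (φ1 : Arc I J → ℝ) (K : I ⊕ J → ℕ)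
    (x : Finset (Arc I J)) (w : Finset (I × J)) (y : Arc I J → ℝ) : Prop :=
  (∀ a, 0 ≤ y a ∧ y a ≤ 1) ∧
  (∀ a, y a ≤ φ1 (arcRev a) * (if arcRev a ∈ x then 1 else 0)) ∧
  R1mem K x w ∧
  ∀ l : I ⊕ J, outSumF y l ≤ (K l : ℝ)

/-! ### Auxiliary lemmas -/

section Aux
open Finset

variable {α : Type*} [Fintype α]

/-- Generic Bernoulli product weight. -/
def wt (p : α → ℝ) (B : Finset α) : ℝ :=
  (∏ a ∈ B, p a) * ∏ a ∈ Bᶜ, (1 - p a)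

lemma wt_nonneg {p : α → ℝ} (hp : ∀ a, 0 ≤ p a ∧ p a ≤ 1) (B : Finset α) :
    0 ≤ wt p B := by
  apply mul_nonneg
  · exact Finset.prod_nonneg fun a _ => (hp a).1
  · exact Finset.prod_nonneg fun a _ => by linarith [(hp a).2]

lemma genfun (p : α → ℝ) (A : Finset α) (g : α → ℝ) :
    ∑ B : Finset α, wt p B * ∏ a ∈ B ∩ A, g a
      = ∏ a ∈ A, (1 - p a + p a * g a) := by
  have key : ∀ B : Finset α, wt p B * ∏ a ∈ B ∩ A, g a
      = (∏ a ∈ B, (p a * (if a ∈ A then g a else 1))) * ∏ a ∈ univ \ B, (1 - p a) := by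
    intro B
    rw [Finset.prod_mul_distrib]
    have h1 : ∏ a ∈ B, (if a ∈ A then g a else 1) = ∏ a ∈ B ∩ A, g a := by
      rw [← Finset.prod_filter, Finset.filter_mem_eq_inter]
    rw [h1, wt, Finset.compl_eq_univ_sdiff]
    ring
  rw [Finset.sum_congr rfl fun B _ => key B]
  have h2 : ∑ B : Finset α, (∏ a ∈ B, (p a * (if a ∈ A then g a else 1))) *
      ∏ a ∈ univ \ B, (1 - p a)
      = ∏ a : α, (p a * (if a ∈ A then g a else 1) + (1 - p a)) := by
    rw [Finset.prod_add, Finset.powerset_univ]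
  rw [h2, ← Finset.prod_mul_prod_compl A]
  have h3 : ∏ a ∈ Aᶜ, (p a * (if a ∈ A then g a else 1) + (1 - p a)) = 1 := by
    apply Finset.prod_eq_one
    intro a ha
    rw [Finset.mem_compl] at ha
    simp [ha]
  rw [h3, mul_one]
  exact Finset.prod_congr rfl fun a ha => by simp [ha]; ring

lemma sum_wt (p : α → ℝ) : ∑ B : Finset α, wt p B = 1 := by
  have := genfun p (∅ : Finset α) (fun _ => 1)
  simpa using this

lemma sum_wt_mem (p : α → ℝ) (c : α) :
    ∑ B : Finset α, wt p B * (if c ∈ B then 1 else 0) = p c := by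
  have h := genfun p {c} (fun _ => 0)
  have h1 : ∀ B : Finset α, (∏ a ∈ B ∩ {c}, (0:ℝ)) = 1 - (if c ∈ B then 1 else 0) := by
    intro B
    by_cases hc : c ∈ B
    · have : B ∩ {c} = {c} := by
        ext a; simp only [Finset.mem_inter, Finset.mem_singleton]
        constructor
        · rintro ⟨_, rfl⟩; rfl
        · rintro rfl; exact ⟨hc, rfl⟩
      simp [this, hc]
    · have : B ∩ {c} = ∅ := by
        ext a
        simp only [Finset.mem_inter, Finset.mem_singleton, Finset.notMem_empty, iff_false,
          not_and]
        rintro ha rfl; exact hc ha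
      simp [this, hc]
  rw [Finset.sum_congr rfl fun B _ => by rw [h1 B]] at h
  simp only [Finset.prod_singleton, mul_zero, add_zero, mul_sub, mul_one] at h
  rw [Finset.sum_sub_distrib, sum_wt] at h
  linarith

lemma sum_wt_pow (p : α → ℝ) (A : Finset α) (r : ℝ) :
    ∑ B : Finset α, wt p B * r ^ (B ∩ A).card = ∏ a ∈ A, (1 - p a + p a * r) := by
  have h := genfun p A (fun _ => r)
  simpa [Finset.prod_const] using h

lemma min_ge_geom (n K : ℕ) (hK : 1 ≤ K) :
    (K : ℝ) * (1 - (1 - 1/(K:ℝ))^n) ≤ min (n:ℝ) (K:ℝ) := by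
  have hK0 : (0:ℝ) < K := by exact_mod_cast hK
  have h1 : (0:ℝ) ≤ 1 - 1/(K:ℝ) := by
    rw [sub_nonneg, div_le_one hK0]; exact_mod_cast hK
  have hbern : 1 - (n:ℝ)/(K:ℝ) ≤ (1 - 1/(K:ℝ))^n := by
    have h := one_add_mul_le_pow (a := -(1/(K:ℝ))) (by nlinarith [one_div_pos.2 hK0]) n
    have e1 : (1:ℝ) + -(1/K) = 1 - 1/(K:ℝ) := by ring
    rw [e1] at h
    calc 1 - (n:ℝ)/(K:ℝ) = 1 + (n:ℝ) * (-(1/K)) := by ring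
    _ ≤ (1 - 1/(K:ℝ))^n := h
  have hp : (0:ℝ) ≤ (1 - 1/(K:ℝ))^n := pow_nonneg h1 n
  refine le_min ?_ (by nlinarith)
  have h2 : (K:ℝ) * (1 - (1 - 1/(K:ℝ))^n) ≤ (K:ℝ) * ((n:ℝ)/(K:ℝ)) :=
    mul_le_mul_of_nonneg_left (by linarith) hK0.le
  calc (K:ℝ) * (1 - (1 - 1/(K:ℝ))^n) ≤ (K:ℝ) * ((n:ℝ)/(K:ℝ)) := h2
  _ = (n:ℝ) := by field_simp

lemma one_sub_exp_ge (t : ℝ) (ht : 0 ≤ t) :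
    (1 - (Real.exp 1)⁻¹) * min t 1 ≤ 1 - Real.exp (-t) := by
  rcases le_or_gt t 1 with h | h
  · rw [min_eq_left h]
    have hc : Real.exp ((1-t) • (0:ℝ) + t • (-1:ℝ)) ≤
        (1-t) * Real.exp 0 + t * Real.exp (-1) :=
      convexOn_exp.2 (Set.mem_univ (0:ℝ)) (Set.mem_univ (-1:ℝ)) (by linarith) ht (by ring)
    simp only [smul_eq_mul, mul_neg, mul_one, mul_zero, zero_add, Real.exp_zero] at hc
    rw [Real.exp_neg 1] at hc
    have hle : Real.exp (-t) ≤ (1-t) * 1 + t * (Real.exp 1)⁻¹ := by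
      calc Real.exp (-t) = Real.exp ((1-t) * 0 + t * -1) := by ring_nf
      _ ≤ (1-t) * 1 + t * (Real.exp 1)⁻¹ := by simpa using hc
    nlinarith
  · rw [min_eq_right h.le]
    have h2 : Real.exp (-t) ≤ Real.exp (-1) := Real.exp_le_exp.2 (by linarith)
    rw [Real.exp_neg 1] at h2
    linarith

lemma one_sub_inv_exp_nonneg : (0:ℝ) ≤ 1 - (Real.exp 1)⁻¹ := by
  have h1 : (1:ℝ) ≤ Real.exp 1 := by linarith [Real.add_one_le_exp (1:ℝ)]
  have : (Real.exp 1)⁻¹ ≤ 1 := by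
    rw [inv_le_one_iff₀]; right; exact h1
  linarith

lemma exp_min_ge (p : α → ℝ) (hp : ∀ a, 0 ≤ p a ∧ p a ≤ 1) (A : Finset α) (K : ℕ) :
    (1 - (Real.exp 1)⁻¹) * min (∑ a ∈ A, p a) (K:ℝ)
      ≤ ∑ B : Finset α, wt p B * ((min (B ∩ A).card K : ℕ) : ℝ) := by
  have hμ0 : 0 ≤ ∑ a ∈ A, p a := Finset.sum_nonneg fun a _ => (hp a).1
  set μ := ∑ a ∈ A, p a with hμ
  rcases Nat.eq_zero_or_pos K with hK0 | hK1
  · subst hK0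
    simp only [Nat.cast_zero, min_eq_right hμ0]
    have h0 : ∀ B : Finset α, (0:ℝ) ≤ wt p B * ((min (B ∩ A).card 0 : ℕ) : ℝ) :=
      fun B => mul_nonneg (wt_nonneg hp B) (Nat.cast_nonneg _)
    simpa using Finset.sum_nonneg fun B _ => h0 B
  · set lam : ℝ := 1 - 1/(K:ℝ) with hlam
    have hKR : (0:ℝ) < K := by exact_mod_cast hK1
    have hpt : ∀ B : Finset α,
        wt p B * ((K:ℝ) * (1 - lam ^ (B ∩ A).card)) ≤
        wt p B * ((min (B ∩ A).card K : ℕ) : ℝ) := by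
      intro B
      apply mul_le_mul_of_nonneg_left _ (wt_nonneg hp B)
      rw [Nat.cast_min]
      exact min_ge_geom _ _ hK1
    have hstep : ∑ B : Finset α, wt p B * ((K:ℝ) * (1 - lam ^ (B ∩ A).card))
        ≤ ∑ B : Finset α, wt p B * ((min (B ∩ A).card K : ℕ) : ℝ) :=
      Finset.sum_le_sum fun B _ => hpt B
    have hcomp : ∑ B : Finset α, wt p B * ((K:ℝ) * (1 - lam ^ (B ∩ A).card))
        = (K:ℝ) * (1 - ∏ a ∈ A, (1 - p a + p a * lam)) := by
      have e1 : ∀ B : Finset α, wt p B * ((K:ℝ) * (1 - lam ^ (B ∩ A).card))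
          = (K:ℝ) * wt p B - (K:ℝ) * (wt p B * lam ^ (B ∩ A).card) := by
        intro B; ring
      rw [Finset.sum_congr rfl fun B _ => e1 B, Finset.sum_sub_distrib,
        ← Finset.mul_sum, ← Finset.mul_sum, sum_wt, sum_wt_pow]
      ring
    have hprod : ∏ a ∈ A, (1 - p a + p a * lam) ≤ Real.exp (-(μ/(K:ℝ))) := by
      have hfac : ∀ a ∈ A, 1 - p a + p a * lam ≤ Real.exp (-(p a/(K:ℝ))) := by
        intro a _
        have h := Real.add_one_le_exp (-(p a/(K:ℝ)))
        have e2 : 1 - p a + p a * lam = -(p a/(K:ℝ)) + 1 := by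
          rw [hlam]; field_simp; ring
        rw [e2]; exact h
      have hfac0 : ∀ a ∈ A, 0 ≤ 1 - p a + p a * lam := by
        intro a _
        have h1K : 1/(K:ℝ) ≤ 1 := by
          rw [div_le_one hKR]; exact_mod_cast hK1
        have hl0 : 0 ≤ lam := by rw [hlam]; linarith
        nlinarith [(hp a).1, (hp a).2]
      calc ∏ a ∈ A, (1 - p a + p a * lam) ≤ ∏ a ∈ A, Real.exp (-(p a/(K:ℝ))) :=
            Finset.prod_le_prod hfac0 hfac
      _ = Real.exp (∑ a ∈ A, -(p a/(K:ℝ))) := (Real.exp_sum _ _).symm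
      _ = Real.exp (-(μ/(K:ℝ))) := by
            rw [hμ]; congr 1
            simp only [Finset.sum_neg_distrib, Finset.sum_div]
    have hfin : (1 - (Real.exp 1)⁻¹) * min μ (K:ℝ)
        ≤ (K:ℝ) * (1 - ∏ a ∈ A, (1 - p a + p a * lam)) := by
      have h8 := one_sub_exp_ge (μ/(K:ℝ)) (div_nonneg hμ0 hKR.le)
      have hmin : (K:ℝ) * min (μ/(K:ℝ)) 1 = min μ (K:ℝ) := by
        rcases le_total μ (K:ℝ) with h | h
        · rw [min_eq_left h, min_eq_left (by rw [div_le_one hKR]; exact h)]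
          field_simp
        · rw [min_eq_right h, min_eq_right (by rw [le_div_iff₀ hKR]; linarith)]
          ring
      have hm := mul_le_mul_of_nonneg_left h8 hKR.le
      rw [mul_comm ((1:ℝ) - (Real.exp 1)⁻¹) _, ← mul_assoc, hmin,
        mul_comm _ ((1:ℝ) - (Real.exp 1)⁻¹)] at hm
      calc (1 - (Real.exp 1)⁻¹) * min μ (K:ℝ) ≤ (K:ℝ) * (1 - Real.exp (-(μ/(K:ℝ)))) := hm
      _ ≤ (K:ℝ) * (1 - ∏ a ∈ A, (1 - p a + p a * lam)) := by
          apply mul_le_mul_of_nonneg_left _ hKR.le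
          linarith
    rw [← hcomp] at hfin
    exact le_trans hfin hstep

lemma bestSum_ge {β : Type*} (s : Finset β) (K : ℕ) (φ : β → ℝ) (S : Finset β)
    (hS : S ⊆ s) (hc : S.card ≤ K) : ∑ x ∈ S, φ x ≤ bestSum s K φ := by
  apply Finset.le_sup' (fun S => ∑ x ∈ S, φ x)
  simp only [Finset.mem_filter, Finset.mem_powerset]
  exact ⟨hS, hc⟩

lemma bestSum_nonneg {β : Type*} (s : Finset β) (K : ℕ) (φ : β → ℝ) :
    0 ≤ bestSum s K φ := by
  have := bestSum_ge s K φ ∅ (Finset.empty_subset s) (by simp)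
  simpa using this

lemma bestSum_exists {β : Type*} (s : Finset β) (K : ℕ) (φ : β → ℝ) :
    ∃ S, S ⊆ s ∧ S.card ≤ K ∧ bestSum s K φ = ∑ x ∈ S, φ x := by
  obtain ⟨S, hS, he⟩ := Finset.exists_mem_eq_sup'
    (⟨∅, by simp⟩ : ((s.powerset.filter fun S => S.card ≤ K)).Nonempty)
    (fun S => ∑ x ∈ S, φ x)
  rw [Finset.mem_filter, Finset.mem_powerset] at hS
  exact ⟨S, hS.1, hS.2, he⟩

lemma bestSum_layer {β : Type*} (s A : Finset β) (K : ℕ) (v v' : β → ℝ) (θ : ℝ)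
    (hθ : 0 ≤ θ) (hv : ∀ j, v j = v' j + (if j ∈ A then θ else 0))
    (hv'0 : ∀ j, 0 ≤ v' j) (hv'A : ∀ j ∉ A, v' j = 0) :
    bestSum s K v' + θ * (min (s ∩ A).card K : ℕ) ≤ bestSum s K v := by
  obtain ⟨S', hS's, hS'c, hS'e⟩ := bestSum_exists s K v'
  set S'' := S' ∩ A with hS''
  have hsum'' : ∑ x ∈ S'', v' x = ∑ x ∈ S', v' x := by
    rw [← Finset.sum_filter_add_sum_filter_not S' (fun j => j ∈ A) v']
    have h0 : ∑ x ∈ S'.filter (fun j => ¬ j ∈ A), v' x = 0 :=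
      Finset.sum_eq_zero fun x hx => hv'A x (Finset.mem_filter.1 hx).2
    rw [h0, add_zero, hS'', Finset.filter_mem_eq_inter]
  have hS''sub : S'' ⊆ s ∩ A := Finset.inter_subset_inter hS's (Finset.Subset.refl A)
  have hcard : S''.card ≤ min (s ∩ A).card K :=
    le_min (Finset.card_le_card hS''sub)
      (le_trans (Finset.card_le_card Finset.inter_subset_left) hS'c)
  obtain ⟨S, hsub1, hsub2, hScard⟩ := Finset.exists_subsuperset_card_eq hS''sub hcard
    (min_le_left _ _)
  have hSK : S.card ≤ K := by rw [hScard]; exact min_le_right _ _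
  have hSs : S ⊆ s := hsub2.trans Finset.inter_subset_left
  have hSA : S ⊆ A := hsub2.trans Finset.inter_subset_right
  have hval : ∑ x ∈ S, v x = ∑ x ∈ S, v' x + θ * (min (s ∩ A).card K : ℕ) := by
    rw [Finset.sum_congr rfl (fun x _ => hv x), Finset.sum_add_distrib]
    congr 1
    have hA : ∀ x ∈ S, (if x ∈ A then θ else 0) = θ := fun x hx => if_pos (hSA hx)
    rw [Finset.sum_congr rfl hA, Finset.sum_const, hScard, nsmul_eq_mul, mul_comm]
  have hmono : ∑ x ∈ S'', v' x ≤ ∑ x ∈ S, v' x :=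
    Finset.sum_le_sum_of_subset_of_nonneg hsub1 fun i _ _ => hv'0 i
  have hle := bestSum_ge s K v S hSs hSK
  rw [hval] at hle
  rw [hS'e, ← hsum'']
  linarith

lemma perUser {ι : Type*} [Fintype ι] (p : α → ℝ) (hp : ∀ a, 0 ≤ p a ∧ p a ≤ 1)
    (emb : ι → α) (hemb : Function.Injective emb)
    (sB : Finset α → Finset ι) (hsB : ∀ B t, t ∈ sB B ↔ emb t ∈ B)
    (K : ℕ) (y : ι → ℝ)
    (hy0 : ∀ t, 0 ≤ y t) (hyq : ∀ t, y t ≤ p (emb t)) (hyK : ∑ t, y t ≤ (K:ℝ))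
    (v : ι → ℝ) (hv0 : ∀ t, 0 ≤ v t) :
    (1 - (Real.exp 1)⁻¹) * ∑ t, v t * y t
      ≤ ∑ B : Finset α, wt p B * bestSum (sB B) K v := by
  have hc : (0:ℝ) ≤ 1 - (Real.exp 1)⁻¹ := one_sub_inv_exp_nonneg
  have main : ∀ (n : ℕ) (v : ι → ℝ), (∀ t, 0 ≤ v t) →
      (univ.filter fun t => v t ≠ 0).card ≤ n →
      (1 - (Real.exp 1)⁻¹) * ∑ t, v t * y t
        ≤ ∑ B : Finset α, wt p B * bestSum (sB B) K v := by
    intro n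
    induction n with
    | zero =>
      intro v hv0 hcard
      have hz : ∀ t, v t = 0 := by
        intro t
        by_contra ht
        have hmem : t ∈ univ.filter fun t => v t ≠ 0 := by simp [ht]
        have := Finset.card_pos.2 ⟨t, hmem⟩
        omega
      have h1 : ∑ t, v t * y t = 0 := Finset.sum_eq_zero fun t _ => by rw [hz t]; ring
      rw [h1, mul_zero]
      exact Finset.sum_nonneg fun B _ => mul_nonneg (wt_nonneg hp B) (bestSum_nonneg _ _ _)
    | succ n ih =>
      intro v hv0 hcard
      set Asupp := univ.filter fun t => v t ≠ 0 with hAsupp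
      rcases Finset.eq_empty_or_nonempty Asupp with hemp | hne
      · have hz : ∀ t, v t = 0 := by
          intro t
          by_contra ht
          have hmem : t ∈ Asupp := by simp [hAsupp, ht]
          rw [hemp] at hmem; exact absurd hmem (Finset.notMem_empty t)
        have h1 : ∑ t, v t * y t = 0 := Finset.sum_eq_zero fun t _ => by rw [hz t]; ring
        rw [h1, mul_zero]
        exact Finset.sum_nonneg fun B _ => mul_nonneg (wt_nonneg hp B) (bestSum_nonneg _ _ _)
      · obtain ⟨t₀, ht₀A, ht₀min⟩ := Finset.exists_min_image Asupp v hne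
        set θ := v t₀ with hθdef
        have ht₀ne : v t₀ ≠ 0 := (Finset.mem_filter.1 ht₀A).2
        have hθpos : 0 < θ := lt_of_le_of_ne (hv0 t₀) (Ne.symm ht₀ne)
        set v' : ι → ℝ := fun t => v t - (if t ∈ Asupp then θ else 0) with hv'def
        have hv'0 : ∀ t, 0 ≤ v' t := by
          intro t
          rw [hv'def]
          by_cases ht : t ∈ Asupp
          · simp only [ht, if_true]
            linarith [ht₀min t ht]
          · simp only [ht, if_false, sub_zero]
            exact hv0 t
        have hv'A : ∀ t ∉ Asupp, v' t = 0 := by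
          intro t ht
          have hvt : v t = 0 := by
            by_contra h; exact ht (by simp [hAsupp, h])
          simp [hv'def, ht, hvt]
        have hvv' : ∀ t, v t = v' t + (if t ∈ Asupp then θ else 0) := by
          intro t; rw [hv'def]; ring
        have hsupp' : (univ.filter fun t => v' t ≠ 0) ⊆ Asupp.erase t₀ := by
          intro t ht
          rw [Finset.mem_filter] at ht
          rw [Finset.mem_erase]
          constructor
          · rintro rfl
            apply ht.2
            simp [hv'def, ht₀A, hθdef]
          · by_contra h
            exact ht.2 (hv'A t h)
        have hcard' : (univ.filter fun t => v' t ≠ 0).card ≤ n := by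
          have h1 := Finset.card_le_card hsupp'
          have h2 := Finset.card_erase_of_mem ht₀A
          have h3 : Asupp.card ≤ n + 1 := hcard
          omega
        have hIH := ih v' hv'0 hcard'
        have hlay : ∀ B : Finset α,
            wt p B * bestSum (sB B) K v' +
              θ * (wt p B * ((min ((sB B) ∩ Asupp).card K : ℕ) : ℝ))
            ≤ wt p B * bestSum (sB B) K v := by
          intro B
          have hb := bestSum_layer (sB B) Asupp K v v' θ
            hθpos.le hvv' hv'0 hv'A
          have hwtn := wt_nonneg hp B
          nlinarith [hb, hwtn]
        have hcardeq : ∀ B : Finset α,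
            ((sB B) ∩ Asupp).card = (B ∩ Asupp.image emb).card := by
          intro B
          have h1 : (sB B) ∩ Asupp
              = Asupp.filter fun t => emb t ∈ B := by
            ext t
            simp only [Finset.mem_inter, Finset.mem_filter, hsB B t]
            tauto
          rw [h1]
          rw [← Finset.card_image_of_injective _ hemb]
          congr 1
          ext a
          simp only [Finset.mem_image, Finset.mem_filter, Finset.mem_inter]
          constructor
          · rintro ⟨t, ⟨htA, htB⟩, rfl⟩
            exact ⟨htB, t, htA, rfl⟩
          · rintro ⟨haB, t, htA, rfl⟩
            exact ⟨t, ⟨htA, haB⟩, rfl⟩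
        have hmin : (1 - (Real.exp 1)⁻¹) * ∑ t ∈ Asupp, y t
            ≤ ∑ B : Finset α, wt p B *
                ((min ((sB B) ∩ Asupp).card K : ℕ) : ℝ) := by
          have h9 := exp_min_ge p hp (Asupp.image emb) K
          have hμ : ∑ a ∈ Asupp.image emb, p a = ∑ t ∈ Asupp, p (emb t) :=
            Finset.sum_image fun t _ s _ h => hemb h
          have hyle : ∑ t ∈ Asupp, y t ≤ min (∑ a ∈ Asupp.image emb, p a) (K:ℝ) := by
            refine le_min ?_ ?_
            · rw [hμ]; exact Finset.sum_le_sum fun t _ => hyq t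
            · have h1 : ∑ t ∈ Asupp, y t ≤ ∑ t, y t :=
                Finset.sum_le_sum_of_subset_of_nonneg (Finset.subset_univ _)
                  fun t _ _ => hy0 t
              exact h1.trans hyK
          have hrw : ∑ B : Finset α, wt p B * ((min (B ∩ Asupp.image emb).card K : ℕ) : ℝ)
              = ∑ B : Finset α, wt p B *
                ((min ((sB B) ∩ Asupp).card K : ℕ) : ℝ) :=
            Finset.sum_congr rfl fun B _ => by rw [hcardeq B]
          have h2 := mul_le_mul_of_nonneg_left hyle hc
          rw [hrw] at h9
          exact h2.trans h9
        have hsum : ∑ B : Finset α, wt p B * bestSum (sB B) K v' +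
            θ * ∑ B : Finset α, wt p B *
              ((min ((sB B) ∩ Asupp).card K : ℕ) : ℝ)
            ≤ ∑ B : Finset α, wt p B * bestSum (sB B) K v := by
          rw [Finset.mul_sum, ← Finset.sum_add_distrib]
          exact Finset.sum_le_sum fun B _ => hlay B
        have hdecomp : ∑ t, v t * y t = ∑ t, v' t * y t + θ * ∑ t ∈ Asupp, y t := by
          have e1 : ∀ t, v t * y t = v' t * y t + (if t ∈ Asupp then θ * y t else 0) := by
            intro t
            rw [hvv' t]
            by_cases ht : t ∈ Asupp <;> simp [ht] <;> ring
          rw [Finset.sum_congr rfl fun t _ => e1 t, Finset.sum_add_distrib]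
          congr 1
          rw [← Finset.sum_filter]
          rw [Finset.mul_sum]
          apply Finset.sum_congr
          · ext t; simp [hAsupp]
          · intros; rfl
        rw [hdecomp, mul_add]
        have h2 : θ * ((1 - (Real.exp 1)⁻¹) * ∑ t ∈ Asupp, y t)
            ≤ θ * ∑ B : Finset α, wt p B *
              ((min ((sB B) ∩ Asupp).card K : ℕ) : ℝ) :=
          mul_le_mul_of_nonneg_left hmin hθpos.le
        have e2 : (1 - (Real.exp 1)⁻¹) * (θ * ∑ t ∈ Asupp, y t)
            = θ * ((1 - (Real.exp 1)⁻¹) * ∑ t ∈ Asupp, y t) := by ring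
        rw [e2]
        linarith [hIH, h2, hsum]
  exact main (univ.filter fun t => v t ≠ 0).card v hv0 le_rfl

end Aux

/-! ### Bridge lemmas for the matching model -/

section Bridge
open Finset

variable {I J : Type*} [Fintype I] [Fintype J]

lemma probOf_eq_wt (φ1 : Arc I J → ℝ) (x : Finset (Arc I J)) (B : Finset (Arc I J)) :
    probOf φ1 x B = wt (fun a => if a ∈ x then φ1 a else 0) B := by
  unfold probOf wt
  congr 1
  apply Finset.prod_congr
  · ext a; simp
  · intros; rfl

lemma pX_prop {φ1 : Arc I J → ℝ} (hφ1 : ∀ a, 0 ≤ φ1 a ∧ φ1 a ≤ 1) (x : Finset (Arc I J)) :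
    ∀ a : Arc I J, 0 ≤ (if a ∈ x then φ1 a else 0) ∧ (if a ∈ x then φ1 a else 0) ≤ 1 := by
  intro a
  by_cases h : a ∈ x <;> simp [h, (hφ1 a).1, (hφ1 a).2]

lemma phi_mul_ite (φ1 : Arc I J → ℝ) (x : Finset (Arc I J)) (c : Arc I J) :
    φ1 c * (if c ∈ x then (1:ℝ) else 0) = (if c ∈ x then φ1 c else 0) := by
  by_cases h : c ∈ x <;> simp [h]

/-- The split of `∑ a : Arc I J, f a` into the two sides. -/
lemma arc_sum_split (f : Arc I J → ℝ) :
    ∑ a : Arc I J, f a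
      = (∑ i : I, ∑ j : J, f (Sum.inl (i, j))) + ∑ j : J, ∑ i : I, f (Sum.inr (j, i)) := by
  rw [Fintype.sum_sum_type]
  rw [Fintype.sum_prod_type, Fintype.sum_prod_type]

/-- Lemma B: the realized second-period value of the DH solution is at least
`1 - 1/e` times the LP second-period value. -/
lemma M2_ge_lp (φ1 φ2 : Arc I J → ℝ)
    (hφ1 : ∀ a, 0 ≤ φ1 a ∧ φ1 a ≤ 1) (hφ2 : ∀ a, 0 ≤ φ2 a ∧ φ2 a ≤ 1)
    (K : I ⊕ J → ℕ) (xs : Finset (Arc I J)) (ws : Finset (I × J)) (ys : Arc I J → ℝ)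
    (hfeas : DHfeas φ1 K xs ws ys) :
    (1 - (Real.exp 1)⁻¹) * ∑ a : Arc I J, φ2 a * ys a ≤ M2 φ1 φ2 K xs := by
  obtain ⟨hy01, hyrev, _hR1, hyK⟩ := hfeas
  set p : Arc I J → ℝ := fun a => if a ∈ xs then φ1 a else 0 with hpdef
  have hp := pX_prop hφ1 xs
  -- per user i ∈ I
  have hI : ∀ i : I,
      (1 - (Real.exp 1)⁻¹) * ∑ j : J, φ2 (Sum.inl (i, j)) * ys (Sum.inl (i, j))
        ≤ ∑ B : Finset (Arc I J), wt p B *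
            bestSum (backlogI B i) (K (Sum.inl i)) (fun j => φ2 (Sum.inl (i, j))) := by
    intro i
    have hembI : Function.Injective (fun j : J => (Sum.inr (j, i) : Arc I J)) := by
      intro a b h
      simpa using h
    have h := perUser p hp (fun j : J => (Sum.inr (j, i) : Arc I J)) hembI
      (fun B => backlogI B i) (fun B t => by simp [backlogI])
      (K (Sum.inl i)) (fun j => ys (Sum.inl (i, j)))
      (fun j => (hy01 _).1)
      (fun j => by
        have h1 := hyrev (Sum.inl (i, j))
        rw [show arcRev (Sum.inl (i, j) : Arc I J) = Sum.inr (j, i) from rfl] at h1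
        rw [phi_mul_ite] at h1
        exact h1)
      (hyK (Sum.inl i))
      (fun j => φ2 (Sum.inl (i, j))) (fun j => (hφ2 _).1)
    exact h
  -- per user j ∈ J
  have hJ : ∀ j : J,
      (1 - (Real.exp 1)⁻¹) * ∑ i : I, φ2 (Sum.inr (j, i)) * ys (Sum.inr (j, i))
        ≤ ∑ B : Finset (Arc I J), wt p B *
            bestSum (backlogJ B j) (K (Sum.inr j)) (fun i => φ2 (Sum.inr (j, i))) := by
    intro j
    have hembJ : Function.Injective (fun i : I => (Sum.inl (i, j) : Arc I J)) := by
      intro a b h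
      simpa using h
    have h := perUser p hp (fun i : I => (Sum.inl (i, j) : Arc I J)) hembJ
      (fun B => backlogJ B j) (fun B t => by simp [backlogJ])
      (K (Sum.inr j)) (fun i => ys (Sum.inr (j, i)))
      (fun i => (hy01 _).1)
      (fun i => by
        have h1 := hyrev (Sum.inr (j, i))
        rw [show arcRev (Sum.inr (j, i) : Arc I J) = Sum.inl (i, j) from rfl] at h1
        rw [phi_mul_ite] at h1
        exact h1)
      (hyK (Sum.inr j))
      (fun i => φ2 (Sum.inr (j, i))) (fun i => (hφ2 _).1)
    exact h
  have hsplit := arc_sum_split (fun a => φ2 a * ys a)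
  rw [hsplit, mul_add]
  have hsumI := Finset.sum_le_sum (fun i (_ : i ∈ (univ : Finset I)) => hI i)
  have hsumJ := Finset.sum_le_sum (fun j (_ : j ∈ (univ : Finset J)) => hJ j)
  rw [← Finset.mul_sum] at hsumI hsumJ
  have swapI : ∑ i : I, ∑ B : Finset (Arc I J), wt p B *
      bestSum (backlogI B i) (K (Sum.inl i)) (fun j => φ2 (Sum.inl (i, j)))
      = ∑ B : Finset (Arc I J), wt p B * ∑ i : I,
          bestSum (backlogI B i) (K (Sum.inl i)) (fun j => φ2 (Sum.inl (i, j))) := by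
    rw [Finset.sum_comm]
    exact Finset.sum_congr rfl fun B _ => (Finset.mul_sum _ _ _).symm
  have swapJ : ∑ j : J, ∑ B : Finset (Arc I J), wt p B *
      bestSum (backlogJ B j) (K (Sum.inr j)) (fun i => φ2 (Sum.inr (j, i)))
      = ∑ B : Finset (Arc I J), wt p B * ∑ j : J,
          bestSum (backlogJ B j) (K (Sum.inr j)) (fun i => φ2 (Sum.inr (j, i))) := by
    rw [Finset.sum_comm]
    exact Finset.sum_congr rfl fun B _ => (Finset.mul_sum _ _ _).symm
  rw [swapI] at hsumI
  rw [swapJ] at hsumJ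
  have hM2 : M2 φ1 φ2 K xs
      = (∑ B : Finset (Arc I J), wt p B * ∑ i : I,
          bestSum (backlogI B i) (K (Sum.inl i)) (fun j => φ2 (Sum.inl (i, j)))) +
        ∑ B : Finset (Arc I J), wt p B * ∑ j : J,
          bestSum (backlogJ B j) (K (Sum.inr j)) (fun i => φ2 (Sum.inr (j, i))) := by
    unfold M2 fval
    rw [← Finset.sum_add_distrib]
    apply Finset.sum_congr rfl
    intro B _
    rw [probOf_eq_wt φ1 xs B]
    ring
  rw [hM2]
  exact add_le_add hsumI hsumJ

/-- Lemma A: any `R¹`-feasible pair admits a DH-feasible `y` whose LP second-period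
value equals the true expected second-period value. -/
lemma relax_ub (φ1 φ2 : Arc I J → ℝ)
    (hφ1 : ∀ a, 0 ≤ φ1 a ∧ φ1 a ≤ 1)
    (K : I ⊕ J → ℕ) (x : Finset (Arc I J)) (w : Finset (I × J)) (hxw : R1mem K x w) :
    ∃ y : Arc I J → ℝ, DHfeas φ1 K x w y ∧
      ∑ a : Arc I J, φ2 a * y a = M2 φ1 φ2 K x := by
  classical
  set p : Arc I J → ℝ := fun a => if a ∈ x then φ1 a else 0 with hpdef
  have hp := pX_prop hφ1 x
  choose SI hSIsub hSIcard hSIval using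
    fun (i : I) (B : Finset (Arc I J)) =>
      bestSum_exists (backlogI B i) (K (Sum.inl i)) (fun j => φ2 (Sum.inl (i, j)))
  choose SJ hSJsub hSJcard hSJval using
    fun (j : J) (B : Finset (Arc I J)) =>
      bestSum_exists (backlogJ B j) (K (Sum.inr j)) (fun i => φ2 (Sum.inr (j, i)))
  set y : Arc I J → ℝ := fun a =>
    match a with
    | Sum.inl (i, j) => ∑ B : Finset (Arc I J), wt p B * (if j ∈ SI i B then 1 else 0)
    | Sum.inr (j, i) => ∑ B : Finset (Arc I J), wt p B * (if i ∈ SJ j B then 1 else 0)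
    with hydef
  have hterm_nonneg : ∀ (B : Finset (Arc I J)) (c : Prop) [Decidable c],
      (0:ℝ) ≤ wt p B * (if c then 1 else 0) := by
    intro B c _
    apply mul_nonneg (wt_nonneg hp B)
    split <;> norm_num
  have hy_nonneg : ∀ a, 0 ≤ y a := by
    intro a
    rcases a with ⟨i, j⟩ | ⟨j, i⟩ <;>
      exact Finset.sum_nonneg fun B _ => hterm_nonneg B _
  have hy_le_one : ∀ a, y a ≤ 1 := by
    intro a
    have hle : ∀ (s : Finset (Arc I J) → Prop) [DecidablePred s],
        ∑ B : Finset (Arc I J), wt p B * (if s B then 1 else 0) ≤ 1 := by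
      intro s _
      calc ∑ B : Finset (Arc I J), wt p B * (if s B then 1 else 0)
          ≤ ∑ B : Finset (Arc I J), wt p B := by
            apply Finset.sum_le_sum
            intro B _
            have := wt_nonneg hp B
            split <;> nlinarith
      _ = 1 := sum_wt p
    rcases a with ⟨i, j⟩ | ⟨j, i⟩ <;> exact hle _
  have hy_rev : ∀ a, y a ≤ φ1 (arcRev a) * (if arcRev a ∈ x then 1 else 0) := by
    intro a
    have key : ∀ (c : Arc I J) (s : Finset (Arc I J) → Prop) [DecidablePred s],
        (∀ B, s B → c ∈ B) →
        ∑ B : Finset (Arc I J), wt p B * (if s B then 1 else 0)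
          ≤ φ1 c * (if c ∈ x then 1 else 0) := by
      intro c s _ hs
      rw [phi_mul_ite]
      have h1 : ∑ B : Finset (Arc I J), wt p B * (if s B then 1 else 0)
          ≤ ∑ B : Finset (Arc I J), wt p B * (if c ∈ B then 1 else 0) := by
        apply Finset.sum_le_sum
        intro B _
        apply mul_le_mul_of_nonneg_left _ (wt_nonneg hp B)
        by_cases h : s B
        · simp [h, hs B h]
        · simp only [h, if_false]
          split <;> norm_num
      have hcm : ∑ B : Finset (Arc I J), wt p B * (if c ∈ B then 1 else 0) = p c := by
        rw [← sum_wt_mem p c]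
        apply Finset.sum_congr rfl
        intro B _
        by_cases h : c ∈ B <;> simp [h]
      exact le_trans h1 (le_of_eq hcm)
    rcases a with ⟨i, j⟩ | ⟨j, i⟩
    · show ∑ B : Finset (Arc I J), wt p B * (if j ∈ SI i B then 1 else 0) ≤ _
      apply key
      intro B hB
      have hmem := hSIsub i B hB
      rw [backlogI, Finset.mem_filter] at hmem
      exact hmem.2
    · show ∑ B : Finset (Arc I J), wt p B * (if i ∈ SJ j B then 1 else 0) ≤ _
      apply key
      intro B hB
      have hmem := hSJsub j B hB
      rw [backlogJ, Finset.mem_filter] at hmem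
      exact hmem.2
  have hy_out : ∀ l : I ⊕ J, outSumF y l ≤ (K l : ℝ) := by
    intro l
    rcases l with i | j
    · show ∑ j : J, y (Sum.inl (i, j)) ≤ _
      have e1 : ∑ j : J, y (Sum.inl (i, j))
          = ∑ B : Finset (Arc I J), wt p B * ((SI i B).card : ℝ) := by
        rw [Finset.sum_comm]
        apply Finset.sum_congr rfl
        intro B _
        rw [← Finset.mul_sum]
        congr 1
        rw [Finset.sum_boole, Finset.filter_univ_mem]
      rw [e1]
      calc ∑ B : Finset (Arc I J), wt p B * ((SI i B).card : ℝ)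
          ≤ ∑ B : Finset (Arc I J), wt p B * (K (Sum.inl i) : ℝ) := by
            apply Finset.sum_le_sum
            intro B _
            apply mul_le_mul_of_nonneg_left _ (wt_nonneg hp B)
            exact_mod_cast hSIcard i B
      _ = (K (Sum.inl i) : ℝ) := by rw [← Finset.sum_mul, sum_wt, one_mul]
    · show ∑ i : I, y (Sum.inr (j, i)) ≤ _
      have e1 : ∑ i : I, y (Sum.inr (j, i))
          = ∑ B : Finset (Arc I J), wt p B * ((SJ j B).card : ℝ) := by
        rw [Finset.sum_comm]
        apply Finset.sum_congr rfl
        intro B _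
        rw [← Finset.mul_sum]
        congr 1
        rw [Finset.sum_boole, Finset.filter_univ_mem]
      rw [e1]
      calc ∑ B : Finset (Arc I J), wt p B * ((SJ j B).card : ℝ)
          ≤ ∑ B : Finset (Arc I J), wt p B * (K (Sum.inr j) : ℝ) := by
            apply Finset.sum_le_sum
            intro B _
            apply mul_le_mul_of_nonneg_left _ (wt_nonneg hp B)
            exact_mod_cast hSJcard j B
      _ = (K (Sum.inr j) : ℝ) := by rw [← Finset.sum_mul, sum_wt, one_mul]
  refine ⟨y, ⟨fun a => ⟨hy_nonneg a, hy_le_one a⟩, hy_rev, hxw, hy_out⟩, ?_⟩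
  -- objective equality
  rw [arc_sum_split (fun a => φ2 a * y a)]
  have eI : ∑ i : I, ∑ j : J, φ2 (Sum.inl (i, j)) * y (Sum.inl (i, j))
      = ∑ B : Finset (Arc I J), wt p B *
          ∑ i : I, bestSum (backlogI B i) (K (Sum.inl i)) (fun j => φ2 (Sum.inl (i, j))) := by
    have e2 : ∀ i : I, ∑ j : J, φ2 (Sum.inl (i, j)) * y (Sum.inl (i, j))
        = ∑ B : Finset (Arc I J), wt p B *
            bestSum (backlogI B i) (K (Sum.inl i)) (fun j => φ2 (Sum.inl (i, j))) := by
      intro i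
      have e3 : ∀ j : J, φ2 (Sum.inl (i, j)) * y (Sum.inl (i, j))
          = ∑ B : Finset (Arc I J), wt p B *
              (if j ∈ SI i B then φ2 (Sum.inl (i, j)) else 0) := by
        intro j
        show φ2 (Sum.inl (i, j)) *
            (∑ B : Finset (Arc I J), wt p B * (if j ∈ SI i B then 1 else 0)) = _
        rw [Finset.mul_sum]
        apply Finset.sum_congr rfl
        intro B _
        split <;> ring
      rw [Finset.sum_congr rfl fun j _ => e3 j, Finset.sum_comm]
      apply Finset.sum_congr rfl
      intro B _
      rw [← Finset.mul_sum]
      congr 1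
      rw [← Finset.sum_filter]
      rw [hSIval i B]
      apply Finset.sum_congr
      · rw [Finset.filter_univ_mem]
      · intros; rfl
    rw [Finset.sum_congr rfl fun i _ => e2 i, Finset.sum_comm]
    apply Finset.sum_congr rfl
    intro B _
    rw [← Finset.mul_sum]
  have eJ : ∑ j : J, ∑ i : I, φ2 (Sum.inr (j, i)) * y (Sum.inr (j, i))
      = ∑ B : Finset (Arc I J), wt p B *
          ∑ j : J, bestSum (backlogJ B j) (K (Sum.inr j)) (fun i => φ2 (Sum.inr (j, i))) := by
    have e2 : ∀ j : J, ∑ i : I, φ2 (Sum.inr (j, i)) * y (Sum.inr (j, i))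
        = ∑ B : Finset (Arc I J), wt p B *
            bestSum (backlogJ B j) (K (Sum.inr j)) (fun i => φ2 (Sum.inr (j, i))) := by
      intro j
      have e3 : ∀ i : I, φ2 (Sum.inr (j, i)) * y (Sum.inr (j, i))
          = ∑ B : Finset (Arc I J), wt p B *
              (if i ∈ SJ j B then φ2 (Sum.inr (j, i)) else 0) := by
        intro i
        show φ2 (Sum.inr (j, i)) *
            (∑ B : Finset (Arc I J), wt p B * (if i ∈ SJ j B then 1 else 0)) = _
        rw [Finset.mul_sum]
        apply Finset.sum_congr rfl
        intro B _
        split <;> ring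
      rw [Finset.sum_congr rfl fun i _ => e3 i, Finset.sum_comm]
      apply Finset.sum_congr rfl
      intro B _
      rw [← Finset.mul_sum]
      congr 1
      rw [← Finset.sum_filter]
      rw [hSJval j B]
      apply Finset.sum_congr
      · rw [Finset.filter_univ_mem]
      · intros; rfl
    rw [Finset.sum_congr rfl fun j _ => e2 j, Finset.sum_comm]
    apply Finset.sum_congr rfl
    intro B _
    rw [← Finset.mul_sum]
  rw [eI, eJ, ← Finset.sum_add_distrib]
  unfold M2 fval
  apply Finset.sum_congr rfl
  intro B _
  rw [probOf_eq_wt φ1 x B]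
  ring

lemma M1_nonneg (φ1 : Arc I J → ℝ) (hφ1 : ∀ a, 0 ≤ φ1 a ∧ φ1 a ≤ 1) (w : Finset (I × J)) :
    0 ≤ M1 φ1 w :=
  Finset.sum_nonneg fun e _ => mul_nonneg (hφ1 _).1 (hφ1 _).1

end Bridge

/-- the Dating Heuristic achieves a `1 - 1/e` approximation guarantee:
if `(x*, w*, y*)` is an optimal solution of the DH relaxation, then the expected number
of matches obtained by displaying `(x*, w*)` in the first period (followed by optimal
second-period responses) is at least `1 - 1/e` times the optimum over `R¹`. -/
theorem DH_guarantee
    {I J : Type*} [Fintype I] [Fintype J]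
    (φ1 φ2 : Arc I J → ℝ)
    (hφ1 : ∀ a, 0 ≤ φ1 a ∧ φ1 a ≤ 1) (hφ2 : ∀ a, 0 ≤ φ2 a ∧ φ2 a ≤ 1)
    (K : I ⊕ J → ℕ)
    (xs : Finset (Arc I J)) (ws : Finset (I × J)) (ys : Arc I J → ℝ)
    (hfeas : DHfeas φ1 K xs ws ys)
    (hopt : ∀ (x : Finset (Arc I J)) (w : Finset (I × J)) (y : Arc I J → ℝ),
      DHfeas φ1 K x w y →
      M1 φ1 w + ∑ a : Arc I J, φ2 a * y a ≤
        M1 φ1 ws + ∑ a : Arc I J, φ2 a * ys a) :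
    ∀ (x : Finset (Arc I J)) (w : Finset (I × J)), R1mem K x w →
      (1 - (Real.exp 1)⁻¹) * (M1 φ1 w + M2 φ1 φ2 K x) ≤
        M1 φ1 ws + M2 φ1 φ2 K xs := by
  intro x w hxw
  obtain ⟨y, hyfeas, hyeq⟩ := relax_ub φ1 φ2 hφ1 K x w hxw
  have hopt' := hopt x w y hyfeas
  have h1 : M1 φ1 w + M2 φ1 φ2 K x ≤ M1 φ1 ws + ∑ a : Arc I J, φ2 a * ys a := by
    rw [← hyeq]; exact hopt'
  have hc0 := one_sub_inv_exp_nonneg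
  have hc1 : 1 - (Real.exp 1)⁻¹ ≤ 1 := by
    have := (Real.exp_pos 1).le
    have : (0:ℝ) ≤ (Real.exp 1)⁻¹ := inv_nonneg.2 this
    linarith
  have h2 := mul_le_mul_of_nonneg_left h1 hc0
  rw [mul_add, mul_add] at h2
  rw [mul_add]
  have hB := M2_ge_lp φ1 φ2 hφ1 hφ2 K xs ws ys hfeas
  have hM1 := M1_nonneg φ1 hφ1 ws
  have h3 : (1 - (Real.exp 1)⁻¹) * M1 φ1 ws ≤ M1 φ1 ws := by nlinarith
  linarith
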